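/- Let S be a connected bipartite vertex set of G and let v ∉ S be a vertex adjacent to at least one vertex of S. Then S ∪ {v} is a connected bipartite vertex set if and only if all neighbors of v in S lie in the same side of the bipartition of G[S] induced by distance parity from the smallest vertex of S. -/

import Mathlib

variable {V : Type*}

def IsBipartition (G : SimpleGraph V) (L R : Set V) : Prop :=
  (∀ v, v ∈ L ∨ v ∈ R) ∧ (∀ v, ¬(v ∈ L ∧ v ∈ R)) ∧
    ∀ u v, G.Adj u v → (u ∈ L ∧ v ∈ R) ∨ (u ∈ R ∧ v ∈ L)

def IsBip (G : SimpleGraph V) : Prop := ∃ L R : Set V, IsBipartition G L R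

/-- `S` is a connected bipartite vertex set of `G`. -/
def CBVS (G : SimpleGraph V) (S : Set V) : Prop :=
  (G.induce S).Connected ∧ IsBip (G.induce S)

open SimpleGraph

lemma walk_parity {W : Type*} {H : SimpleGraph W} {L R : Set W}
    (hb : IsBipartition H L R) {a b : W} (p : H.Walk a b) :
    Even p.length ↔ (a ∈ L ↔ b ∈ L) := by
  induction p with
  | nil => simp
  | @cons x y z h p ih =>
    have hxy : x ∈ L ↔ ¬ (y ∈ L) := by
      have d1 := hb.2.1 x; have d2 := hb.2.1 y; have c := hb.1 y
      rcases hb.2.2 _ _ h with ⟨h1, h2⟩ | ⟨h1, h2⟩ <;> tauto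
    simp only [Walk.length_cons, Nat.even_add_one, ih]
    tauto

lemma dist_parity {W : Type*} {H : SimpleGraph W} {L R : Set W}
    (hconn : H.Connected) (hb : IsBipartition H L R) (a b : W) :
    Even (H.dist a b) ↔ (a ∈ L ↔ b ∈ L) := by
  obtain ⟨p, hp⟩ := hconn.exists_walk_length_eq_dist a b
  rw [← hp]; exact walk_parity hb p

lemma adj_parity_flip {W : Type*} {H : SimpleGraph W}
    (hconn : H.Connected) (hbip : IsBip H) {a b : W} (hab : H.Adj a b) (r : W) :
    ¬ (Even (H.dist r a) ↔ Even (H.dist r b)) := by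
  obtain ⟨L, R, hb⟩ := hbip
  rw [dist_parity hconn hb, dist_parity hconn hb]
  have d1 := hb.2.1 a; have d2 := hb.2.1 b; have c1 := hb.1 a; have c2 := hb.1 b
  rcases hb.2.2 _ _ hab with ⟨h1, h2⟩ | ⟨h1, h2⟩ <;> tauto

theorem stmt_2 [Fintype V] [LinearOrder V] (G : SimpleGraph V) (hG : G.Connected)
    (S : Set V) (hS : CBVS G S)
    (r : V) (hr : r ∈ S) (hmin : ∀ s ∈ S, r ≤ s)
    (v : V) (hv : v ∉ S) (hadj : ∃ s ∈ S, G.Adj v s) :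
    CBVS G (S ∪ {v}) ↔
      ((∀ s, ∀ hs : s ∈ S, G.Adj v s → Even ((G.induce S).dist ⟨r, hr⟩ ⟨s, hs⟩)) ∨
       (∀ s, ∀ hs : s ∈ S, G.Adj v s → Odd ((G.induce S).dist ⟨r, hr⟩ ⟨s, hs⟩))) := by
  obtain ⟨hconn, hbip⟩ := hS
  obtain ⟨s₀, hs₀, hvs₀⟩ := hadj
  set H := G.induce S with hH
  set H' := G.induce (S ∪ {v}) with hH'
  have hvm : v ∈ S ∪ {v} := Or.inr rfl
  have hι : ∀ u : S, ((u : V) ∈ S ∪ {v}) := fun u => Or.inl u.2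
  -- hom from H to H'
  let f : H →g H' := ⟨fun u => ⟨u.1, hι u⟩, fun h => h⟩
  constructor
  · rintro ⟨hconn', L', R', hb'⟩
    -- restricted bipartition on S
    set L₀ : Set S := {u | (⟨u.1, hι u⟩ : ↑(S ∪ {v})) ∈ L'} with hL₀
    set R₀ : Set S := {u | (⟨u.1, hι u⟩ : ↑(S ∪ {v})) ∈ R'} with hR₀
    have hb₀ : IsBipartition H L₀ R₀ := by
      refine ⟨fun u => hb'.1 _, fun u => hb'.2.1 _, fun u w h => hb'.2.2 _ _ h⟩
    set v' : ↑(S ∪ {v}) := ⟨v, hvm⟩ with hv'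
    have key : ∀ s (hs : s ∈ S), G.Adj v s →
        (Even (H.dist ⟨r, hr⟩ ⟨s, hs⟩) ↔ ((⟨r, hr⟩ : S) ∈ L₀ ↔ ¬ v' ∈ L')) := by
      intro s hs hadj
      have hadj' : H'.Adj v' ⟨s, Or.inl hs⟩ := hadj
      have hsv : ((⟨s, Or.inl hs⟩ : ↑(S ∪ {v})) ∈ L') ↔ ¬ v' ∈ L' := by
        have d1 := hb'.2.1 v'; have d2 := hb'.2.1 (⟨s, Or.inl hs⟩ : ↑(S ∪ {v}))
        have c := hb'.1 v'
        rcases hb'.2.2 _ _ hadj' with ⟨h1, h2⟩ | ⟨h1, h2⟩ <;> tauto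
      rw [dist_parity hconn hb₀]
      have : ((⟨s, hs⟩ : S) ∈ L₀) ↔ ¬ v' ∈ L' := hsv
      tauto
    by_cases hP : ((⟨r, hr⟩ : S) ∈ L₀ ↔ ¬ v' ∈ L')
    · left; intro s hs h; exact (key s hs h).2 hP
    · right; intro s hs h
      rw [← Nat.not_even_iff_odd]
      intro he
      exact hP ((key s hs h).1 he)
  · intro hcases
    have hconn' : H'.Connected := by
      have hreach : ∀ u : ↑(S ∪ {v}), H'.Reachable u ⟨s₀, Or.inl hs₀⟩ := by
        intro u
        rcases u.2 with hu | hu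
        · exact (hconn ⟨u.1, hu⟩ ⟨s₀, hs₀⟩).map f
        · have : H'.Adj u ⟨s₀, Or.inl hs₀⟩ := by
            have : (u : V) = v := hu
            show G.Adj u.1 s₀
            rw [this]; exact hvs₀
          exact this.reachable
      haveI : Nonempty ↑(S ∪ {v}) := ⟨⟨v, hvm⟩⟩
      exact ⟨fun u w => (hreach u).trans (hreach w).symm⟩
    refine ⟨hconn', ?_⟩
    rcases hcases with hall | hall
    · -- all even: L₁ = vertices of S with even dist; v gets R side
      refine ⟨{u | ∃ h : (u : V) ∈ S, Even (H.dist ⟨r, hr⟩ ⟨u.1, h⟩)},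
        {u | ¬ ∃ h : (u : V) ∈ S, Even (H.dist ⟨r, hr⟩ ⟨u.1, h⟩)}, ?_, ?_, ?_⟩
      · intro u; exact em _
      · intro u; exact fun h => h.2 h.1
      · intro u w h
        have huw : G.Adj u.1 w.1 := h
        rcases u.2 with hu | hu <;> rcases w.2 with hw | hw
        · have := adj_parity_flip hconn hbip (show H.Adj ⟨u.1, hu⟩ ⟨w.1, hw⟩ from huw) ⟨r, hr⟩
          by_cases he : Even (H.dist ⟨r, hr⟩ ⟨u.1, hu⟩)
          · left
            refine ⟨⟨hu, he⟩, ?_⟩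
            rintro ⟨hw', he'⟩
            exact this ⟨fun _ => he', fun _ => he⟩
          · right
            constructor
            · rintro ⟨hu', he'⟩; exact he he'
            · refine ⟨hw, ?_⟩
              by_contra he'
              exact this ⟨fun h => absurd h he, fun h => absurd h he'⟩
        · -- u ∈ S, w = v
          have hwv : (w : V) = v := hw
          have hadj : G.Adj v u.1 := by simpa only [hwv] using huw.symm
          left
          refine ⟨⟨hu, hall u.1 hu hadj⟩, ?_⟩
          rintro ⟨hw', _⟩
          rw [hwv] at hw'; exact hv hw'
        · have huv : (u : V) = v := hu
          have hadj : G.Adj v w.1 := by simpa only [huv] using huw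
          right
          constructor
          · rintro ⟨hu', _⟩; rw [huv] at hu'; exact hv hu'
          · exact ⟨hw, hall w.1 hw hadj⟩
        · exact absurd (hu.trans hw.symm) huw.ne
    · -- all odd: L₁ = {v} ∪ even-dist vertices? v goes with even side's opposite:
      -- neighbors are odd, so put v in the even side.
      refine ⟨{u | (u : V) ∉ S ∨ ∃ h : (u : V) ∈ S, Even (H.dist ⟨r, hr⟩ ⟨u.1, h⟩)},
        {u | (u : V) ∈ S ∧ ¬ ∃ h : (u : V) ∈ S, Even (H.dist ⟨r, hr⟩ ⟨u.1, h⟩)}, ?_, ?_, ?_⟩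
      · intro u
        by_cases hu : (u : V) ∈ S
        · by_cases he : ∃ h : (u : V) ∈ S, Even (H.dist ⟨r, hr⟩ ⟨u.1, h⟩)
          · exact Or.inl (Or.inr he)
          · exact Or.inr ⟨hu, he⟩
        · exact Or.inl (Or.inl hu)
      · rintro u ⟨h1 | h1, h2, h3⟩
        · exact h1 h2
        · exact h3 h1
      · intro u w h
        have huw : G.Adj u.1 w.1 := h
        rcases u.2 with hu | hu <;> rcases w.2 with hw | hw
        · have := adj_parity_flip hconn hbip (show H.Adj ⟨u.1, hu⟩ ⟨w.1, hw⟩ from huw) ⟨r, hr⟩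
          by_cases he : Even (H.dist ⟨r, hr⟩ ⟨u.1, hu⟩)
          · left
            refine ⟨Or.inr ⟨hu, he⟩, hw, ?_⟩
            rintro ⟨hw', he'⟩
            exact this ⟨fun _ => he', fun _ => he⟩
          · right
            refine ⟨⟨hu, fun h' => he h'.2⟩, Or.inr ⟨hw, ?_⟩⟩
            by_contra he'
            exact this ⟨fun h => absurd h he, fun h => absurd h he'⟩
        · have hwv : (w : V) = v := hw
          have hadj : G.Adj v u.1 := by simpa only [hwv] using huw.symm
          have hodd := hall u.1 hu hadj
          right
          refine ⟨⟨hu, fun h' => (Nat.not_even_iff_odd.mpr hodd) h'.2⟩, ?_⟩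
          left; rw [hwv]; exact hv
        · have huv : (u : V) = v := hu
          have hadj : G.Adj v w.1 := by simpa only [huv] using huw
          have hodd := hall w.1 hw hadj
          left
          refine ⟨Or.inl (by rw [huv]; exact hv), hw, fun h' => (Nat.not_even_iff_odd.mpr hodd) h'.2⟩
        · exact absurd (hu.trans hw.symm) huw.ne
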